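/- Let a, c be real and ε>1. Then lim_{λ→+∞} [Γ(c+λ)·Γ(1+a−c+(ε−1)λ) / (Γ(a+ελ) · (2πλ)^{1/2} · ε^{1/2−a−ελ} · (ε−1)^{1/2+a−c+(ε−1)λ})] = 1. That is, the quantity Ĝ(λ)=Γ(c+λ)Γ(1+a−c+(ε−1)λ)/Γ(a+ελ) satisfies Ĝ(λ) ~ (2πλ)^{1/2}·ε^{1/2−a−ελ}·(ε−1)^{1/2+a−c+(ε−1)λ} as λ→+∞. -/

import Mathlib

open Real Filter Topology

lemma wendel_upper {x s : ℝ} (hx : 0 < x) (hs0 : 0 ≤ s) (hs1 : s ≤ 1) :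
    Gamma (x + s) ≤ Gamma x * x ^ s := by
  rcases eq_or_lt_of_le hs0 with h0 | h0
  · simp [← h0]
  rcases eq_or_lt_of_le hs1 with h1 | h1
  · subst h1
    rw [Real.Gamma_add_one hx.ne', Real.rpow_one]; ring_nf; exact le_refl _
  have key := Real.Gamma_mul_add_mul_le_rpow_Gamma_mul_rpow_Gamma hx
    (by linarith : (0:ℝ) < x + 1) (by linarith : (0:ℝ) < 1 - s) h0 (by ring)
  have e : (1 - s) * x + s * (x + 1) = x + s := by ring
  rw [e, Real.Gamma_add_one hx.ne'] at key
  have hG := Real.Gamma_pos_of_pos hx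
  calc Gamma (x + s) ≤ Gamma x ^ (1 - s) * (x * Gamma x) ^ s := key
    _ = Gamma x * x ^ s := by
        rw [Real.mul_rpow hx.le hG.le, ← mul_assoc, mul_comm (Gamma x ^ (1-s)),
          mul_assoc, ← Real.rpow_add hG]
        rw [show (1:ℝ) - s + s = 1 by ring, Real.rpow_one]; ring

lemma wendel_lower {x s : ℝ} (hx : 0 < x) (hs0 : 0 ≤ s) (hs1 : s ≤ 1) :
    x * Gamma x ≤ Gamma (x + s) * (x + s) ^ (1 - s) := by
  rcases eq_or_lt_of_le hs0 with h0 | h0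
  · rw [← h0]; simp [Real.rpow_one]; ring_nf; exact le_refl _
  rcases eq_or_lt_of_le hs1 with h1 | h1
  · subst h1
    rw [Real.Gamma_add_one hx.ne']; simp
  have hxs : (0:ℝ) < x + s := by linarith
  have key := Real.Gamma_mul_add_mul_le_rpow_Gamma_mul_rpow_Gamma hxs
    (by linarith : (0:ℝ) < x + s + 1) h0 (by linarith : (0:ℝ) < 1 - s) (by ring)
  have e : s * (x + s) + (1 - s) * (x + s + 1) = x + 1 := by ring
  rw [e, Real.Gamma_add_one hx.ne', Real.Gamma_add_one hxs.ne'] at key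
  have hG := Real.Gamma_pos_of_pos hxs
  calc x * Gamma x ≤ Gamma (x+s) ^ s * ((x+s) * Gamma (x+s)) ^ (1-s) := key
    _ = Gamma (x + s) * (x + s) ^ (1 - s) := by
        rw [Real.mul_rpow hxs.le hG.le, show Gamma (x+s) ^ s * ((x+s)^(1-s) * Gamma (x+s)^(1-s))
          = (Gamma (x+s)^s * Gamma (x+s)^(1-s)) * (x+s)^(1-s) by ring, ← Real.rpow_add hG]
        norm_num

lemma gamma_nat_stirling :
    Tendsto (fun n : ℕ => Gamma n / ((2*π)^((1:ℝ)/2) * (n:ℝ) ^ ((n:ℝ) - 1/2) * exp (-(n:ℝ))))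
      atTop (𝓝 1) := by
  have hπ : (0:ℝ) < √π := Real.sqrt_pos.mpr Real.pi_pos
  have h2 : Tendsto (fun n : ℕ => Stirling.stirlingSeq n / √π) atTop (𝓝 1) := by
    simpa [div_self hπ.ne'] using Stirling.tendsto_stirlingSeq_sqrt_pi.div_const (√π)
  refine h2.congr' ?_
  filter_upwards [eventually_ge_atTop 1] with n hn
  obtain ⟨m, rfl⟩ : ∃ m, n = m + 1 := ⟨n - 1, (Nat.succ_pred_eq_of_pos hn).symm⟩
  set N : ℝ := ((m + 1 : ℕ) : ℝ) with hN
  have hNpos : (0:ℝ) < N := by positivity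
  have hGamma : Gamma ((m+1 : ℕ) : ℝ) = (m.factorial : ℝ) := by
    rw [show ((m+1:ℕ):ℝ) = (m:ℝ)+1 by push_cast; ring]
    exact_mod_cast Real.Gamma_nat_eq_factorial m
  have hst : Stirling.stirlingSeq (m+1)
      = ((m+1).factorial : ℝ) / (√2 * N ^ ((1:ℝ)/2) * (N ^ (m+1) / exp 1 ^ (m+1))) := by
    rw [Stirling.stirlingSeq, div_pow]
    congr 2
    · rw [show (2 * ((m+1:ℕ):ℝ)) = 2 * N from rfl, Real.sqrt_mul (by norm_num : (0:ℝ) ≤ 2),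
        Real.sqrt_eq_rpow N]
  have hrp : N ^ ((((m+1:ℕ):ℝ)) - 1/2) = N ^ (m+1) / N ^ ((1:ℝ)/2) := by
    rw [← Real.rpow_natCast N (m+1), ← Real.rpow_sub hNpos]
  have hexp : exp (-(((m+1:ℕ):ℝ))) = (exp 1 ^ (m+1))⁻¹ := by
    rw [Real.exp_neg, ← Real.exp_nat_mul]
    norm_num
  have hsqrt2pi : ((2*π : ℝ)) ^ ((1:ℝ)/2) = √2 * √π := by
    rw [← Real.sqrt_eq_rpow, Real.sqrt_mul (by norm_num : (0:ℝ) ≤ 2)]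
  have hfac : ((m+1).factorial : ℝ) = (m+1) * (m.factorial : ℝ) := by
    rw [Nat.factorial_succ]; push_cast; ring
  rw [hst, hGamma, hrp, hexp, hsqrt2pi, hfac]
  have hb1 : (0:ℝ) < √2 := by positivity
  have hb2 : (0:ℝ) < N ^ ((1:ℝ)/2) := Real.rpow_pos_of_pos hNpos _
  have hb3 : (0:ℝ) < N ^ (m+1) := by positivity
  have hb4 : (0:ℝ) < exp 1 ^ (m+1) := by positivity
  have hNm : N = (m:ℝ) + 1 := by rw [hN]; push_cast; ring
  have key : N ^ ((1:ℝ)/2) * N ^ ((1:ℝ)/2) = N := by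
    rw [← Real.rpow_add hNpos]; norm_num
  have key' : N ^ ((1:ℝ)/2) * N ^ ((1:ℝ)/2) = (m:ℝ) + 1 := by rw [key, hNm]
  field_simp
  linear_combination (-1 : ℝ) * key'

lemma gamma_stirling :
    Tendsto (fun x : ℝ => Gamma x / ((2*π)^((1:ℝ)/2) * x ^ (x - 1/2) * exp (-x)))
      atTop (𝓝 1) := by
  set N : ℝ → ℝ := fun x => (⌊x⌋₊ : ℝ) with hNdef
  set W : ℝ → ℝ := fun x => Gamma x / (Gamma (N x) * (N x) ^ (x - N x)) with hWdef
  set Q : ℝ → ℝ := fun x =>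
    Gamma (N x) / ((2*π)^((1:ℝ)/2) * (N x) ^ ((N x) - 1/2) * exp (-(N x))) with hQdef
  set V : ℝ → ℝ := fun x => ((N x) ^ (x - 1/2) / x ^ (x - 1/2)) * exp (x - N x) with hVdef
  have basic : ∀ᶠ x : ℝ in atTop, 2 ≤ x ∧ 1 ≤ N x ∧ N x ≤ x ∧ x - 1 < N x := by
    filter_upwards [eventually_ge_atTop (2:ℝ)] with x hx
    have h0 : (0:ℝ) ≤ x := by linarith
    refine ⟨hx, ?_, Nat.floor_le h0, Nat.sub_one_lt_floor x⟩
    exact Nat.one_le_cast.mpr ((Nat.one_le_floor_iff x).mpr (by linarith))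
  have hinv : Tendsto (fun x : ℝ => 1/x) atTop (𝓝 0) := by
    simpa [one_div] using tendsto_inv_atTop_zero
  -- (B) : W → 1
  have hW : Tendsto W atTop (𝓝 1) := by
    have hlow : Tendsto (fun x : ℝ => 1 - 1/x) atTop (𝓝 1) := by
      simpa using tendsto_const_nhds.sub hinv
    refine tendsto_of_tendsto_of_tendsto_of_le_of_le' hlow tendsto_const_nhds ?_ ?_
    · filter_upwards [basic] with x ⟨hx2, hN1, hNx, hNgt⟩
      have hxpos : (0:ℝ) < x := by linarith
      have hNpos : (0:ℝ) < N x := by linarith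
      have hGN := Real.Gamma_pos_of_pos hNpos
      set s := x - N x with hs
      have hs0 : 0 ≤ s := by simp only [hs]; linarith
      have hs1 : s ≤ 1 := by simp only [hs]; linarith
      have hwl := wendel_lower hNpos hs0 hs1
      rw [show N x + s = x by simp [hs]] at hwl
      have hxp : (0:ℝ) < x ^ (1 - s) := Real.rpow_pos_of_pos hxpos _
      have hNp : (0:ℝ) < (N x) ^ s := Real.rpow_pos_of_pos hNpos _
      have hratio0 : 0 < N x / x := div_pos hNpos hxpos
      have hratio : N x / x ≤ 1 := (div_le_one hxpos).mpr hNx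
      have h1 : (N x / x) ^ (1 - s) ≤ W x := by
        show (N x / x) ^ (1-s) ≤ Gamma x / (Gamma (N x) * (N x) ^ s)
        rw [Real.div_rpow hNpos.le hxpos.le,
          div_le_div_iff₀ hxp (mul_pos hGN hNp)]
        calc N x ^ (1-s) * (Gamma (N x) * N x ^ s)
            = (N x ^ (1-s) * N x ^ s) * Gamma (N x) := by ring
          _ = N x * Gamma (N x) := by
              rw [← Real.rpow_add hNpos]; norm_num
          _ ≤ Gamma x * x ^ (1 - s) := hwl
      have h2 : 1 - 1/x ≤ (N x / x) ^ (1 - s) := by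
        calc 1 - 1/x = (x - 1)/x := by field_simp
          _ ≤ N x / x := (div_le_div_iff_of_pos_right hxpos).mpr hNgt.le
          _ = (N x / x) ^ (1:ℝ) := (Real.rpow_one _).symm
          _ ≤ (N x / x) ^ (1 - s) :=
              Real.rpow_le_rpow_of_exponent_ge hratio0 hratio (by linarith)
      linarith
    · filter_upwards [basic] with x ⟨hx2, hN1, hNx, hNgt⟩
      have hxpos : (0:ℝ) < x := by linarith
      have hNpos : (0:ℝ) < N x := by linarith
      have hGN := Real.Gamma_pos_of_pos hNpos
      have hNp : (0:ℝ) < (N x) ^ (x - N x) := Real.rpow_pos_of_pos hNpos _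
      have hwu := wendel_upper hNpos (by linarith : (0:ℝ) ≤ x - N x) (by linarith)
      rw [show N x + (x - N x) = x by ring] at hwu
      exact div_le_one_of_le₀ hwu (by positivity)
  -- (C) : Q → 1
  have hQ : Tendsto Q atTop (𝓝 1) :=
    gamma_nat_stirling.comp tendsto_nat_floor_atTop
  -- (D) : V → 1
  have hV : Tendsto V atTop (𝓝 1) := by
    set E : ℝ → ℝ := fun x => (log (N x) - log x) * (x - 1/2) + (x - N x) with hEdef
    have hE : Tendsto E atTop (𝓝 0) := by
      have hlo : Tendsto (fun x : ℝ => -(1/(x-1))) atTop (𝓝 0) := by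
        have h1 : Tendsto (fun x : ℝ => x - 1) atTop atTop :=
          tendsto_atTop_add_const_right _ (-1) tendsto_id |>.congr (by intro x; simp; ring)
        simpa using (hinv.comp h1).neg
      refine tendsto_of_tendsto_of_tendsto_of_le_of_le' hlo hinv ?_ ?_
      · filter_upwards [basic] with x ⟨hx2, hN1, hNx, hNgt⟩
        have hxpos : (0:ℝ) < x := by linarith
        have hNpos : (0:ℝ) < N x := by linarith
        have hx1 : (0:ℝ) < x - 1 := by linarith
        set sx := x - N x with hsx
        have hs0 : 0 ≤ sx := by simp only [hsx]; linarith
        have hs1 : sx ≤ 1 := by simp only [hsx]; linarith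
        have hlog : -(sx/(N x)) ≤ log (N x) - log x := by
          have h := Real.log_le_sub_one_of_pos (div_pos hxpos hNpos)
          rw [Real.log_div hxpos.ne' hNpos.ne'] at h
          have e0 : x / N x - 1 = sx / N x := by field_simp; exact hsx.symm
          linarith [e0 ▸ h]
        have hmul : -(sx/(N x)) * (x - 1/2) ≤ (log (N x) - log x) * (x - 1/2) :=
          mul_le_mul_of_nonneg_right hlog (by linarith)
        have e1 : -(sx/(N x)) * (x - 1/2) + sx = sx*(1/2 - sx)/(N x) := by
          field_simp; rw [hsx]; ring
        have h1 : -(1:ℝ) ≤ sx*(1/2 - sx) := by nlinarith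
        have h2 : (1:ℝ)/(N x) ≤ 1/(x-1) := one_div_le_one_div_of_le hx1 hNgt.le
        have h3 : (-1:ℝ)/(N x) ≤ sx*(1/2 - sx)/(N x) := by
          exact (div_le_div_iff_of_pos_right hNpos).mpr h1
        have hq : -(1/(x-1)) ≤ -(sx/(N x)) * (x - 1/2) + sx := by
          rw [e1]
          calc -(1/(x-1)) ≤ -(1/(N x)) := by linarith
            _ = (-1:ℝ)/(N x) := by ring
            _ ≤ sx*(1/2 - sx)/(N x) := h3
        show -(1/(x-1)) ≤ (log (N x) - log x) * (x - 1/2) + (x - N x)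
        linarith
      · filter_upwards [basic] with x ⟨hx2, hN1, hNx, hNgt⟩
        have hxpos : (0:ℝ) < x := by linarith
        have hNpos : (0:ℝ) < N x := by linarith
        set sx := x - N x with hsx
        have hs0 : 0 ≤ sx := by simp only [hsx]; linarith
        have hs1 : sx ≤ 1 := by simp only [hsx]; linarith
        have hlog : log (N x) - log x ≤ -(sx)/x := by
          have h := Real.log_le_sub_one_of_pos (div_pos hNpos hxpos)
          rw [Real.log_div hNpos.ne' hxpos.ne'] at h
          have e0 : N x / x - 1 = -(sx)/x := by field_simp; ring
          linarith [e0 ▸ h]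
        have hmul : (log (N x) - log x) * (x - 1/2) ≤ -(sx)/x * (x - 1/2) :=
          mul_le_mul_of_nonneg_right hlog (by linarith)
        have e2 : -(sx)/x * (x - 1/2) + sx = sx/(2*x) := by
          field_simp; ring
        have h3 : sx/(2*x) ≤ 1/x := by
          rw [div_le_div_iff₀ (by positivity) hxpos]; nlinarith
        show (log (N x) - log x) * (x - 1/2) + (x - N x) ≤ 1/x
        linarith
    have hVeq : (fun x => exp (E x)) =ᶠ[atTop] V := by
      filter_upwards [basic] with x ⟨hx2, hN1, hNx, hNgt⟩
      have hxpos : (0:ℝ) < x := by linarith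
      have hNpos : (0:ℝ) < N x := by linarith
      show exp ((log (N x) - log x) * (x - 1/2) + (x - N x))
          = ((N x) ^ (x - 1/2) / x ^ (x - 1/2)) * exp (x - N x)
      rw [Real.rpow_def_of_pos hNpos, Real.rpow_def_of_pos hxpos, ← Real.exp_sub,
        ← Real.exp_add]
      congr 1
      ring
    have : Tendsto (fun x => exp (E x)) atTop (𝓝 1) := by
      have := (Real.continuous_exp.tendsto 0).comp hE
      simpa [Function.comp_def] using this
    exact Tendsto.congr' hVeq this
  -- (A) : eventual equality and conclusion
  have prod : Tendsto (fun x => W x * Q x * V x) atTop (𝓝 1) := by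
    have := (hW.mul hQ).mul hV
    simpa using this
  refine Tendsto.congr' ?_ prod
  filter_upwards [basic] with x ⟨hx2, hN1, hNx, hNgt⟩
  have hxpos : (0:ℝ) < x := by linarith
  have hNpos : (0:ℝ) < N x := by linarith
  have hGN := Real.Gamma_pos_of_pos hNpos
  have hC : (0:ℝ) < (2*π)^((1:ℝ)/2) := Real.rpow_pos_of_pos (by positivity) _
  have hp1 : (0:ℝ) < (N x) ^ (x - N x) := Real.rpow_pos_of_pos hNpos _
  have hp2 : (0:ℝ) < (N x) ^ ((N x) - 1/2) := Real.rpow_pos_of_pos hNpos _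
  have hp3 : (0:ℝ) < x ^ (x - 1/2) := Real.rpow_pos_of_pos hxpos _
  have key1 : (N x) ^ (x - 1/2) = (N x) ^ (x - N x) * (N x) ^ ((N x) - 1/2) := by
    rw [← Real.rpow_add hNpos]; congr 1; ring
  have key2 : exp (-(N x)) = exp (x - N x) * exp (-x) := by
    rw [← Real.exp_add]; congr 1; ring
  show W x * Q x * V x = Gamma x / ((2*π)^((1:ℝ)/2) * x ^ (x - 1/2) * exp (-x))
  show Gamma x / (Gamma (N x) * (N x) ^ (x - N x))
      * (Gamma (N x) / ((2*π)^((1:ℝ)/2) * (N x) ^ ((N x) - 1/2) * exp (-(N x))))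
      * (((N x) ^ (x - 1/2) / x ^ (x - 1/2)) * exp (x - N x))
      = Gamma x / ((2*π)^((1:ℝ)/2) * x ^ (x - 1/2) * exp (-x))
  rw [key1, key2]
  have h4 := Real.exp_pos (x - N x)
  have h5 := Real.exp_pos (-x)
  field_simp

lemma one_plus_lim (t : ℝ) :
    Tendsto (fun y : ℝ => (1 + t/y) ^ (y + t - 1/2)) atTop (𝓝 (exp t)) := by
  have h1 := tendsto_one_add_div_rpow_exp t
  have h2 : Tendsto (fun y : ℝ => 1 + t/y) atTop (𝓝 1) := by
    have : Tendsto (fun y : ℝ => t/y) atTop (𝓝 0) := by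
      simpa [div_eq_mul_inv] using tendsto_inv_atTop_zero.const_mul t
    simpa using tendsto_const_nhds.add this
  have h3 : Tendsto (fun y : ℝ => (1 + t/y) ^ (t - 1/2)) atTop (𝓝 1) := by
    have hc : ContinuousAt (fun u : ℝ => u ^ (t - 1/2)) 1 :=
      Real.continuousAt_rpow_const 1 (t - 1/2) (Or.inl one_ne_zero)
    simpa [Real.one_rpow, Function.comp_def] using hc.tendsto.comp h2
  have heq : (fun y : ℝ => (1 + t/y) ^ y * (1 + t/y) ^ (t - 1/2))
      =ᶠ[atTop] (fun y : ℝ => (1 + t/y) ^ (y + t - 1/2)) := by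
    filter_upwards [eventually_gt_atTop (|t|)] with y hy
    have hy0 : 0 < y := lt_of_le_of_lt (abs_nonneg t) hy
    have hpos : 0 < 1 + t/y := by
      have h4 : -(|t|/y) ≤ t/y := by
        rw [← neg_div]
        exact div_le_div_of_nonneg_right (neg_abs_le t) hy0.le
      have h5 : |t|/y < 1 := (div_lt_one hy0).mpr hy
      linarith
    rw [← Real.rpow_add hpos]; congr 1; ring
  exact Tendsto.congr' heq (by simpa using h1.mul h3)

/-- Stirling-type asymptotics:
`Ĝ(λ) = Γ(c+λ)Γ(1+a-c+(ε-1)λ)/Γ(a+ελ) ~ (2πλ)^{1/2} ε^{1/2-a-ελ} (ε-1)^{1/2+a-c+(ε-1)λ}`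
as `λ → +∞`, stated as the ratio tending to `1`. -/
theorem Ghat_asymptotics (a c ε : ℝ) (hε : 1 < ε) :
    Tendsto
      (fun lam : ℝ =>
        Real.Gamma (c + lam) * Real.Gamma (1 + a - c + (ε - 1) * lam) / Real.Gamma (a + ε * lam) /
          ((2 * Real.pi * lam) ^ ((1 : ℝ) / 2) * ε ^ (1 / 2 - a - ε * lam) *
            (ε - 1) ^ (1 / 2 + a - c + (ε - 1) * lam)))
      atTop (𝓝 1) := by
  have hε0 : (0:ℝ) < ε := by linarith
  have hε1 : (0:ℝ) < ε - 1 := by linarith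
  set d : ℝ := 1 + a - c with hd
  set C : ℝ := (2*π)^((1:ℝ)/2) with hC
  have hCpos : 0 < C := Real.rpow_pos_of_pos (by positivity) _
  -- maps to atTop
  have hm1 : Tendsto (fun l : ℝ => (ε - 1) * l) atTop atTop :=
    Tendsto.const_mul_atTop hε1 tendsto_id
  have hm2 : Tendsto (fun l : ℝ => ε * l) atTop atTop :=
    Tendsto.const_mul_atTop hε0 tendsto_id
  have hx1 : Tendsto (fun l : ℝ => c + l) atTop atTop :=
    tendsto_atTop_add_const_left _ c tendsto_id
  have hx2 : Tendsto (fun l : ℝ => d + (ε - 1) * l) atTop atTop :=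
    tendsto_atTop_add_const_left _ d hm1
  have hx3 : Tendsto (fun l : ℝ => a + ε * l) atTop atTop :=
    tendsto_atTop_add_const_left _ a hm2
  -- Stirling ratios
  have hr1 : Tendsto (fun l : ℝ => Gamma (c + l) /
      (C * (c + l) ^ ((c + l) - 1/2) * exp (-(c + l)))) atTop (𝓝 1) :=
    gamma_stirling.comp hx1
  have hr2 : Tendsto (fun l : ℝ => Gamma (d + (ε - 1) * l) /
      (C * (d + (ε - 1) * l) ^ ((d + (ε - 1) * l) - 1/2) * exp (-(d + (ε - 1) * l))))
      atTop (𝓝 1) := gamma_stirling.comp hx2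
  have hr3 : Tendsto (fun l : ℝ => Gamma (a + ε * l) /
      (C * (a + ε * l) ^ ((a + ε * l) - 1/2) * exp (-(a + ε * l)))) atTop (𝓝 1) :=
    gamma_stirling.comp hx3
  -- correction factors
  have hA1 : Tendsto (fun l : ℝ => (1 + c/l) ^ (l + c - 1/2)) atTop (𝓝 (exp c)) :=
    one_plus_lim c
  have hA2 : Tendsto (fun l : ℝ => (1 + d/((ε-1)*l)) ^ ((ε-1)*l + d - 1/2)) atTop
      (𝓝 (exp d)) := (one_plus_lim d).comp hm1
  have hA3 : Tendsto (fun l : ℝ => (1 + a/(ε*l)) ^ (ε*l + a - 1/2)) atTop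
      (𝓝 (exp a)) := (one_plus_lim a).comp hm2
  -- the product
  have hprod : Tendsto (fun l : ℝ =>
      (Gamma (c + l) / (C * (c + l) ^ ((c + l) - 1/2) * exp (-(c + l))))
      * (Gamma (d + (ε - 1) * l) /
          (C * (d + (ε - 1) * l) ^ ((d + (ε - 1) * l) - 1/2) * exp (-(d + (ε - 1) * l))))
      / (Gamma (a + ε * l) / (C * (a + ε * l) ^ ((a + ε * l) - 1/2) * exp (-(a + ε * l))))
      * (exp (-1) * ((1 + c/l) ^ (l + c - 1/2) * (1 + d/((ε-1)*l)) ^ ((ε-1)*l + d - 1/2)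
          / (1 + a/(ε*l)) ^ (ε*l + a - 1/2)))) atTop
      (𝓝 ((1 * 1 / 1) * (exp (-1) * (exp c * exp d / exp a)))) :=
    (((hr1.mul hr2).div hr3 one_ne_zero)).mul
      (tendsto_const_nhds.mul ((hA1.mul hA2).div hA3 (Real.exp_ne_zero a)))
  have hlim : ((1:ℝ) * 1 / 1) * (exp (-1) * (exp c * exp d / exp a)) = 1 := by
    rw [hd, ← Real.exp_add, ← Real.exp_sub, ← Real.exp_add]
    norm_num
  rw [hlim] at hprod
  refine Tendsto.congr' ?_ hprod
  -- eventual identity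
  filter_upwards [eventually_gt_atTop (0:ℝ), hx1.eventually_gt_atTop 0,
    hx2.eventually_gt_atTop 0, hx3.eventually_gt_atTop 0] with l hl h1 h2 h3
  have hΓ1 := Real.Gamma_pos_of_pos h1
  have hΓ2 := Real.Gamma_pos_of_pos h2
  have hΓ3 := Real.Gamma_pos_of_pos h3
  have hu : (0:ℝ) < 1 + c/l := by
    have : 1 + c/l = (c + l)/l := by field_simp; ring
    rw [this]; exact div_pos h1 hl
  have hv : (0:ℝ) < 1 + d/((ε-1)*l) := by
    have : 1 + d/((ε-1)*l) = (d + (ε-1)*l)/((ε-1)*l) := by field_simp; ring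
    rw [this]; exact div_pos h2 (by positivity)
  have hw : (0:ℝ) < 1 + a/(ε*l) := by
    have : 1 + a/(ε*l) = (a + ε*l)/(ε*l) := by field_simp; ring
    rw [this]; exact div_pos h3 (by positivity)
  -- positivity of both sides
  have hS1 : (0:ℝ) < C * (c + l) ^ ((c + l) - 1/2) * exp (-(c + l)) := by positivity
  have hS2 : (0:ℝ) < C * (d + (ε - 1) * l) ^ ((d + (ε - 1) * l) - 1/2)
      * exp (-(d + (ε - 1) * l)) := by positivity
  have hS3 : (0:ℝ) < C * (a + ε * l) ^ ((a + ε * l) - 1/2) * exp (-(a + ε * l)) := by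
    positivity
  have hApos1 : (0:ℝ) < (1 + c/l) ^ (l + c - 1/2) := Real.rpow_pos_of_pos hu _
  have hApos2 : (0:ℝ) < (1 + d/((ε-1)*l)) ^ ((ε-1)*l + d - 1/2) := Real.rpow_pos_of_pos hv _
  have hApos3 : (0:ℝ) < (1 + a/(ε*l)) ^ (ε*l + a - 1/2) := Real.rpow_pos_of_pos hw _
  have hD1 : (0:ℝ) < (2 * π * l) ^ ((1:ℝ)/2) := Real.rpow_pos_of_pos (by positivity) _
  have hD2 : (0:ℝ) < ε ^ (1/2 - a - ε * l) := Real.rpow_pos_of_pos hε0 _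
  have hD3 : (0:ℝ) < (ε - 1) ^ (1/2 + a - c + (ε - 1) * l) := Real.rpow_pos_of_pos hε1 _
  have hLpos : (0:ℝ) < Gamma (c + l) * Gamma (d + (ε - 1) * l) / Gamma (a + ε * l) /
      ((2 * π * l) ^ ((1:ℝ)/2) * ε ^ (1/2 - a - ε * l)
        * (ε - 1) ^ (1/2 + a - c + (ε - 1) * l)) :=
    div_pos (div_pos (mul_pos hΓ1 hΓ2) hΓ3) (mul_pos (mul_pos hD1 hD2) hD3)
  have hRpos : (0:ℝ) < (Gamma (c + l) / (C * (c + l) ^ ((c + l) - 1/2) * exp (-(c + l))))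
      * (Gamma (d + (ε - 1) * l) /
          (C * (d + (ε - 1) * l) ^ ((d + (ε - 1) * l) - 1/2) * exp (-(d + (ε - 1) * l))))
      / (Gamma (a + ε * l) / (C * (a + ε * l) ^ ((a + ε * l) - 1/2) * exp (-(a + ε * l))))
      * (exp (-1) * ((1 + c/l) ^ (l + c - 1/2) * (1 + d/((ε-1)*l)) ^ ((ε-1)*l + d - 1/2)
          / (1 + a/(ε*l)) ^ (ε*l + a - 1/2))) :=
    mul_pos (div_pos (mul_pos (div_pos hΓ1 hS1) (div_pos hΓ2 hS2)) (div_pos hΓ3 hS3))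
      (mul_pos (Real.exp_pos _) (div_pos (mul_pos hApos1 hApos2) hApos3))
  -- log identities
  have l1 : log (c + l) = log l + log (1 + c/l) := by
    rw [show c + l = l * (1 + c/l) by field_simp; ring, Real.log_mul hl.ne' hu.ne']
  have l2 : log (d + (ε - 1) * l) = log (ε - 1) + log l + log (1 + d/((ε-1)*l)) := by
    rw [show d + (ε-1)*l = (ε-1) * l * (1 + d/((ε-1)*l)) by field_simp; ring,
      Real.log_mul (by positivity) hv.ne', Real.log_mul hε1.ne' hl.ne']
  have l3 : log (a + ε * l) = log ε + log l + log (1 + a/(ε*l)) := by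
    rw [show a + ε*l = ε * l * (1 + a/(ε*l)) by field_simp; ring,
      Real.log_mul (by positivity) hw.ne', Real.log_mul hε0.ne' hl.ne']
  have l4 : log (2 * π * l) = log (2 * π) + log l :=
    Real.log_mul (by positivity) hl.ne'
  have hClog : log C = (1/2) * log (2*π) := by
    rw [hC, Real.log_rpow (by positivity)]
  -- log of Stirling denominators
  have hS1log : log (C * (c + l) ^ ((c + l) - 1/2) * exp (-(c + l)))
      = log C + ((c + l) - 1/2) * log (c + l) + (-(c + l)) := by
    rw [Real.log_mul (by positivity) (Real.exp_pos _).ne',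
      Real.log_mul hCpos.ne' (Real.rpow_pos_of_pos h1 _).ne', Real.log_rpow h1, Real.log_exp]
  have hS2log : log (C * (d + (ε - 1) * l) ^ ((d + (ε - 1) * l) - 1/2)
        * exp (-(d + (ε - 1) * l)))
      = log C + ((d + (ε - 1) * l) - 1/2) * log (d + (ε - 1) * l) + (-(d + (ε - 1) * l)) := by
    rw [Real.log_mul (by positivity) (Real.exp_pos _).ne',
      Real.log_mul hCpos.ne' (Real.rpow_pos_of_pos h2 _).ne', Real.log_rpow h2, Real.log_exp]
  have hS3log : log (C * (a + ε * l) ^ ((a + ε * l) - 1/2) * exp (-(a + ε * l)))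
      = log C + ((a + ε * l) - 1/2) * log (a + ε * l) + (-(a + ε * l)) := by
    rw [Real.log_mul (by positivity) (Real.exp_pos _).ne',
      Real.log_mul hCpos.ne' (Real.rpow_pos_of_pos h3 _).ne', Real.log_rpow h3, Real.log_exp]
  -- log of both sides
  have kL : Real.log (Gamma (c + l) * Gamma (d + (ε - 1) * l) / Gamma (a + ε * l) /
      ((2 * π * l) ^ ((1:ℝ)/2) * ε ^ (1/2 - a - ε * l)
        * (ε - 1) ^ (1/2 + a - c + (ε - 1) * l)))
      = log (Gamma (c + l)) + log (Gamma (d + (ε - 1) * l)) - log (Gamma (a + ε * l))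
        - ((1/2) * log (2 * π * l) + (1/2 - a - ε * l) * log ε
          + (1/2 + a - c + (ε - 1) * l) * log (ε - 1)) := by
    rw [Real.log_div (div_pos (mul_pos hΓ1 hΓ2) hΓ3).ne'
        (mul_pos (mul_pos hD1 hD2) hD3).ne',
      Real.log_div (mul_pos hΓ1 hΓ2).ne' hΓ3.ne', Real.log_mul hΓ1.ne' hΓ2.ne',
      Real.log_mul (mul_pos hD1 hD2).ne' hD3.ne', Real.log_mul hD1.ne' hD2.ne',
      Real.log_rpow (by positivity : (0:ℝ) < 2 * π * l), Real.log_rpow hε0,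
      Real.log_rpow hε1]
  have kR : Real.log ((Gamma (c + l) / (C * (c + l) ^ ((c + l) - 1/2) * exp (-(c + l))))
      * (Gamma (d + (ε - 1) * l) /
          (C * (d + (ε - 1) * l) ^ ((d + (ε - 1) * l) - 1/2) * exp (-(d + (ε - 1) * l))))
      / (Gamma (a + ε * l) / (C * (a + ε * l) ^ ((a + ε * l) - 1/2) * exp (-(a + ε * l))))
      * (exp (-1) * ((1 + c/l) ^ (l + c - 1/2) * (1 + d/((ε-1)*l)) ^ ((ε-1)*l + d - 1/2)
          / (1 + a/(ε*l)) ^ (ε*l + a - 1/2))))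
      = ((log (Gamma (c + l)) - (log C + ((c + l) - 1/2) * log (c + l) + (-(c + l))))
        + (log (Gamma (d + (ε - 1) * l))
            - (log C + ((d + (ε - 1) * l) - 1/2) * log (d + (ε - 1) * l)
              + (-(d + (ε - 1) * l))))
        - (log (Gamma (a + ε * l))
            - (log C + ((a + ε * l) - 1/2) * log (a + ε * l) + (-(a + ε * l)))))
        + ((-1) + ((l + c - 1/2) * log (1 + c/l)
            + ((ε-1)*l + d - 1/2) * log (1 + d/((ε-1)*l))
            - (ε*l + a - 1/2) * log (1 + a/(ε*l)))) := by
    rw [Real.log_mul (div_pos (mul_pos (div_pos hΓ1 hS1) (div_pos hΓ2 hS2))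
          (div_pos hΓ3 hS3)).ne'
        (mul_pos (Real.exp_pos _) (div_pos (mul_pos hApos1 hApos2) hApos3)).ne',
      Real.log_div (mul_pos (div_pos hΓ1 hS1) (div_pos hΓ2 hS2)).ne' (div_pos hΓ3 hS3).ne',
      Real.log_mul (div_pos hΓ1 hS1).ne' (div_pos hΓ2 hS2).ne',
      Real.log_div hΓ1.ne' hS1.ne', Real.log_div hΓ2.ne' hS2.ne',
      Real.log_div hΓ3.ne' hS3.ne',
      Real.log_mul (Real.exp_pos _).ne' (div_pos (mul_pos hApos1 hApos2) hApos3).ne',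
      Real.log_div (mul_pos hApos1 hApos2).ne' hApos3.ne',
      Real.log_mul hApos1.ne' hApos2.ne', Real.log_rpow hu, Real.log_rpow hv,
      Real.log_rpow hw, Real.log_exp, hS1log, hS2log, hS3log]
  have key : Real.log ((Gamma (c + l) / (C * (c + l) ^ ((c + l) - 1/2) * exp (-(c + l))))
      * (Gamma (d + (ε - 1) * l) /
          (C * (d + (ε - 1) * l) ^ ((d + (ε - 1) * l) - 1/2) * exp (-(d + (ε - 1) * l))))
      / (Gamma (a + ε * l) / (C * (a + ε * l) ^ ((a + ε * l) - 1/2) * exp (-(a + ε * l))))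
      * (exp (-1) * ((1 + c/l) ^ (l + c - 1/2) * (1 + d/((ε-1)*l)) ^ ((ε-1)*l + d - 1/2)
          / (1 + a/(ε*l)) ^ (ε*l + a - 1/2))))
      = Real.log (Gamma (c + l) * Gamma (d + (ε - 1) * l) / Gamma (a + ε * l) /
      ((2 * π * l) ^ ((1:ℝ)/2) * ε ^ (1/2 - a - ε * l)
        * (ε - 1) ^ (1/2 + a - c + (ε - 1) * l))) := by
    rw [kL, kR, l1, l2, l3, l4, hClog, hd]
    ring
  calc (Gamma (c + l) / (C * (c + l) ^ ((c + l) - 1/2) * exp (-(c + l))))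
      * (Gamma (d + (ε - 1) * l) /
          (C * (d + (ε - 1) * l) ^ ((d + (ε - 1) * l) - 1/2) * exp (-(d + (ε - 1) * l))))
      / (Gamma (a + ε * l) / (C * (a + ε * l) ^ ((a + ε * l) - 1/2) * exp (-(a + ε * l))))
      * (exp (-1) * ((1 + c/l) ^ (l + c - 1/2) * (1 + d/((ε-1)*l)) ^ ((ε-1)*l + d - 1/2)
          / (1 + a/(ε*l)) ^ (ε*l + a - 1/2)))
      = exp (Real.log ((Gamma (c + l) / (C * (c + l) ^ ((c + l) - 1/2) * exp (-(c + l))))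
      * (Gamma (d + (ε - 1) * l) /
          (C * (d + (ε - 1) * l) ^ ((d + (ε - 1) * l) - 1/2) * exp (-(d + (ε - 1) * l))))
      / (Gamma (a + ε * l) / (C * (a + ε * l) ^ ((a + ε * l) - 1/2) * exp (-(a + ε * l))))
      * (exp (-1) * ((1 + c/l) ^ (l + c - 1/2) * (1 + d/((ε-1)*l)) ^ ((ε-1)*l + d - 1/2)
          / (1 + a/(ε*l)) ^ (ε*l + a - 1/2))))) := (Real.exp_log hRpos).symm
    _ = exp (Real.log (Gamma (c + l) * Gamma (d + (ε - 1) * l) / Gamma (a + ε * l) /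
      ((2 * π * l) ^ ((1:ℝ)/2) * ε ^ (1/2 - a - ε * l)
        * (ε - 1) ^ (1/2 + a - c + (ε - 1) * l)))) := by rw [key]
    _ = Gamma (c + l) * Gamma (d + (ε - 1) * l) / Gamma (a + ε * l) /
      ((2 * π * l) ^ ((1:ℝ)/2) * ε ^ (1/2 - a - ε * l)
        * (ε - 1) ^ (1/2 + a - c + (ε - 1) * l)) := Real.exp_log hLpos
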